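/- Let 𝔤 = 𝔤_{-k} ⊕ ⋯ ⊕ 𝔤_0 be a fundamental graded Lie algebra (the action of 𝔤_0 on 𝔤_{-1} is faithful) and 𝔥 = t*(𝔤) with the product metric ⟨·,·⟩ from an adapted metric on 𝔤. If ⟨·,·⟩ is admissible (equivalently, identity (θ([X+ξ, θ([Y, Z+α])]) = [θ([X, θ(Y)]), Z+α] + [Y, θ([X+ξ, θ(Z+α)])] holds for all X+ξ ∈ 𝔤_0 ⊕ 𝔤*, Y ∈ 𝔤_-, Z+α ∈ 𝔥), then 𝔤_0 is abelian. In particular: taking X = 0, Y, Z ∈ 𝔤_{-1}, α, ξ ∈ 𝔤_0* in the identity forces [Y, θ(L_{X_0}(ξ))] = 0 with X_0 = θ(α), and faithfulness of the 𝔤_0-action on 𝔤_{-1} gives L_{X_0}(ξ) = 0 for all X_0 ∈ 𝔤_0, ξ ∈ 𝔤_0*, i.e. the coadjoint action of 𝔤_0 on 𝔤_0* vanishes, so 𝔤_0 is abelian. -/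

import Mathlib

open scoped RealInnerProductSpace

/-!
Statement 17: Let `𝔤 = 𝔤_{-k} ⊕ ⋯ ⊕ 𝔤_0` be a fundamental graded Lie algebra (the
action of `𝔤_0` on `𝔤_{-1}` is faithful) and `𝔥 = t^*(𝔤)` with the orthogonal-sum
metric coming from an adapted metric on `𝔤`. If this metric is admissible —
equivalently, if the identity
`θ([X+ξ, θ([Y, Z+α])]) = [θ([X, θ(Y)]), Z+α] + [Y, θ([X+ξ, θ(Z+α)])]`
holds for all `X+ξ ∈ 𝔤_0 ⊕ 𝔤^*`, `Y ∈ 𝔤_-`, `Z+α ∈ 𝔥` — then `𝔤_0` is abelian.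
(The bracket of `𝔤`, which is `ℝ`-bilinear, is encoded by `ad' : G → G →ₗ[ℝ] G`,
`ad' x y = ⁅x,y⁆`.)
-/

variable {G : Type*} [NormedAddCommGroup G] [InnerProductSpace ℝ G]
  [FiniteDimensional ℝ G] [LieRing G]

attribute [local instance high] NormedAddCommGroup.toAddCommGroup

/-- The coadjoint action `L_X(α) = -α ∘ ad_X`. -/
noncomputable def coadAct (ad' : G → G →ₗ[ℝ] G) (x : G) (η : Module.Dual ℝ G) :
    Module.Dual ℝ G :=
  -(η ∘ₗ ad' x)

/-- The cotangent Lie bracket on `𝔥 = t^*(𝔤) = 𝔤 × 𝔤^*`: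
`[X+ξ, Y+η] = ([X,Y], L_X(η) − L_Y(ξ))`. -/
noncomputable def ctBkt (ad' : G → G →ₗ[ℝ] G) (p q : G × Module.Dual ℝ G) :
    G × Module.Dual ℝ G :=
  (⁅p.1, q.1⁆, coadAct ad' p.1 q.2 - coadAct ad' q.1 p.2)

/-- The musical isomorphism `♭ : 𝔤^* → 𝔤` of the metric. -/
noncomputable def flatG (α : Module.Dual ℝ G) : G :=
  (InnerProductSpace.toDual ℝ G).symm (LinearMap.toContinuousLinearMap α)

/-- The musical isomorphism `♯ : 𝔤 → 𝔤^*`, `X ↦ ⟪X, ·⟫`. -/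
noncomputable def sharpG (x : G) : Module.Dual ℝ G :=
  ((innerSL ℝ x : G →L[ℝ] ℝ) : G →ₗ[ℝ] ℝ)

/-- The involution `θ` of `𝔥 = 𝔤 × 𝔤^*` exchanging `𝔤` and `𝔤^*` via `♯`, `♭`. -/
noncomputable def thetaG (p : G × Module.Dual ℝ G) : G × Module.Dual ℝ G :=
  (flatG p.2, sharpG p.1)

lemma sharpG_apply (x w : G) : sharpG x w = ⟪x, w⟫ := rfl

lemma inner_flatG (η : Module.Dual ℝ G) (w : G) : ⟪flatG η, w⟫ = η w := by
  rw [flatG, InnerProductSpace.toDual_symm_apply]; simp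

lemma flatG_sharpG (x : G) : flatG (sharpG x) = x :=
  ext_inner_right ℝ fun w => by rw [inner_flatG, sharpG_apply]

lemma flatG_zero : flatG (0 : Module.Dual ℝ G) = 0 :=
  ext_inner_right ℝ fun w => by rw [inner_flatG]; simp

lemma flatG_neg (η : Module.Dual ℝ G) : flatG (-η) = -flatG η :=
  ext_inner_right ℝ fun w => by
    rw [inner_flatG, inner_neg_left, inner_flatG]; simp

lemma flatG_eq_zero {η : Module.Dual ℝ G} (h : flatG η = 0) : η = 0 := by
  ext w
  have h2 := inner_flatG η w
  rw [h] at h2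
  simpa using h2.symm

lemma sharpG_zero : sharpG (0 : G) = 0 := by
  ext w; rw [sharpG_apply, LinearMap.zero_apply]; simp

lemma mem_gr_zero (gr : ℤ → Submodule ℝ G) (hint : DirectSum.IsInternal gr)
    (horth : ∀ i j : ℤ, i ≠ j → ∀ x ∈ gr i, ∀ y ∈ gr j, ⟪x, y⟫ = 0)
    (v : G) (h : ∀ j : ℤ, j ≠ 0 → ∀ w ∈ gr j, ⟪v, w⟫ = 0) : v ∈ gr 0 := by
  set K : Submodule ℝ G := ⨆ j : {j : ℤ // j ≠ 0}, gr j.1 with hK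
  have hker : ∀ x : G, (∀ j : ℤ, j ≠ 0 → ∀ w ∈ gr j, ⟪x, w⟫ = 0) →
      ∀ u ∈ K, ⟪u, x⟫ = 0 := by
    intro x hx u hu
    have hle : K ≤ LinearMap.ker (sharpG x) := by
      refine iSup_le fun j w hw => ?_
      rw [LinearMap.mem_ker, sharpG_apply]
      exact hx j.1 j.2 w hw
    have := hle hu
    rw [LinearMap.mem_ker, sharpG_apply] at this
    rw [real_inner_comm]; exact this
  have hvK : v ∈ Kᗮ := (Submodule.mem_orthogonal K v).mpr (hker v h)
  have hg0K : gr 0 ≤ Kᗮ := by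
    intro x hx
    refine (Submodule.mem_orthogonal K x).mpr (hker x ?_)
    intro j hj w hw
    exact horth 0 j (fun e => hj e.symm) x hx w hw
  have hsup : gr 0 ⊔ K = ⊤ := by
    rw [eq_top_iff, ← hint.submodule_iSup_eq_top]
    refine iSup_le fun j => ?_
    by_cases hj : j = 0
    · subst hj; exact le_sup_left
    · exact le_trans (le_iSup (fun j : {j : ℤ // j ≠ 0} => gr j.1) ⟨j, hj⟩) le_sup_right
  obtain ⟨a, ha, b, hb, hab⟩ :=
    Submodule.mem_sup.mp (show v ∈ gr 0 ⊔ K from hsup ▸ Submodule.mem_top)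
  have hbK : b ∈ Kᗮ := by
    have : v - a ∈ Kᗮ := sub_mem hvK (hg0K ha)
    have hba : b = v - a := by rw [← hab]; abel
    rwa [← hba] at this
  have hb0 : b = 0 :=
    Submodule.disjoint_def.mp (Submodule.orthogonal_disjoint K).symm b hbK hb
  rw [← hab, hb0, add_zero]; exact ha

theorem admissible_implies_abelian
    (gr : ℤ → Submodule ℝ G)
    (hint : DirectSum.IsInternal gr)
    (hnonpos : ∀ i : ℤ, 0 < i → gr i = ⊥)
    (hbkt : ∀ i j : ℤ, ∀ x ∈ gr i, ∀ y ∈ gr j, ⁅x, y⁆ ∈ gr (i + j))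
    -- the (ℝ-bilinear) bracket of `𝔤`, as a linear map in the second argument:
    (ad' : G → G →ₗ[ℝ] G) (had' : ∀ x y : G, ad' x y = ⁅x, y⁆)
    -- the metric on `𝔤` is adapted to the gradation:
    (horth : ∀ i j : ℤ, i ≠ j → ∀ x ∈ gr i, ∀ y ∈ gr j, ⟪x, y⟫ = 0)
    -- fundamentality: the (adjoint) action of `𝔤_0` on `𝔤_{-1}` is faithful:
    (hfaith : ∀ A ∈ gr 0, (∀ v ∈ gr (-1), ⁅A, v⁆ = 0) → A = 0)
    -- admissibility of the orthogonal-sum metric of `𝔥 = t^*(𝔤)`, in its equivalent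
    -- form: the `θ`-identity for all `X+ξ ∈ 𝔮 = 𝔤_0 ⊕ 𝔤^*`, `Y ∈ 𝔤_-`, `Z+α ∈ 𝔥`:
    (hadm : ∀ X ∈ gr 0, ∀ ξ : Module.Dual ℝ G, ∀ Y ∈ (⨆ i < (0 : ℤ), gr i),
      ∀ r : G × Module.Dual ℝ G,
        thetaG (ctBkt ad' (X, ξ) (thetaG (ctBkt ad' (Y, 0) r))) =
          ctBkt ad' (thetaG (ctBkt ad' (X, 0) (thetaG (Y, 0)))) r +
            ctBkt ad' (Y, 0) (thetaG (ctBkt ad' (X, ξ) (thetaG r)))) :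
    -- conclusion: `𝔤_0` is abelian
    ∀ A ∈ gr 0, ∀ B ∈ gr 0, ⁅A, B⁆ = 0 := by
  intro A hA B hB
  -- `⁅0, w⁆ = 0` (with the module zero!), via disjointness of the grading
  have zero_bkt : ∀ w : G, ⁅(0 : G), w⁆ = 0 := by
    have hker : (⨆ i, gr i) ≤ LinearMap.ker (ad' 0) := by
      refine iSup_le fun j w hw => ?_
      rw [LinearMap.mem_ker, had']
      have m1 : ⁅(0 : G), w⁆ ∈ gr (0 + j) := hbkt 0 j 0 (zero_mem _) w hw
      have m2 : ⁅(0 : G), w⁆ ∈ gr (1 + j) := hbkt 1 j 0 (zero_mem _) w hw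
      have hd : Disjoint (gr (0 + j)) (gr (1 + j)) :=
        hint.submodule_iSupIndep.pairwiseDisjoint (by omega)
      exact Submodule.disjoint_def.mp hd _ m1 m2
    intro w
    have hw : w ∈ LinearMap.ker (ad' 0) :=
      hker (hint.submodule_iSup_eq_top ▸ Submodule.mem_top)
    rw [LinearMap.mem_ker, had'] at hw
    exact hw
  have bkt_zero : ∀ x : G, ⁅x, (0 : G)⁆ = 0 := by
    intro x; rw [← had', map_zero]
  -- instance-agnostic transfer across skew-symmetry
  have skew0 : ∀ x y : G, ⁅x, y⁆ = 0 → ⁅y, x⁆ = 0 := by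
    intro x y h
    have h1 := lie_skew y x
    have h2 := lie_skew x (0 : G)
    rw [zero_bkt x, bkt_zero x] at h2
    rw [h] at h1
    rw [← h1, h2]
  have ad'_zero : ad' (0 : G) = 0 := by
    ext w; rw [had', zero_bkt]; rfl
  have coad_zl : ∀ η : Module.Dual ℝ G, coadAct ad' 0 η = 0 := by
    intro η; rw [coadAct, ad'_zero]; ext w; simp
  have coad_zr : ∀ x : G, coadAct ad' x (0 : Module.Dual ℝ G) = 0 := by
    intro x; rw [coadAct]; ext w; simp
  -- For `Y ∈ gr (-1)` and `C ∈ gr 0`, the coadjoint action kills `♯C`.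
  have key1 : ∀ Y ∈ gr (-1), ∀ C ∈ gr 0, coadAct ad' Y (sharpG C) = 0 := by
    intro Y hY C hC
    have hker : (⨆ i, gr i) ≤ LinearMap.ker ((sharpG C) ∘ₗ ad' Y) := by
      refine iSup_le fun j w hw => ?_
      rw [LinearMap.mem_ker, LinearMap.comp_apply, sharpG_apply, had']
      by_cases hj : j = 1
      · subst hj
        have hw0 : w = 0 := by
          have := hnonpos 1 one_pos ▸ hw
          simpa using this
        rw [hw0, ← had', map_zero, inner_zero_right]
      · have hmem : ⁅Y, w⁆ ∈ gr (-1 + j) := hbkt (-1) j Y hY w hw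
        exact horth 0 (-1 + j) (by omega) C hC _ hmem
    have hall : (sharpG C) ∘ₗ ad' Y = 0 := by
      ext w
      have : w ∈ LinearMap.ker ((sharpG C) ∘ₗ ad' Y) :=
        hker (hint.submodule_iSup_eq_top ▸ Submodule.mem_top)
      simpa using this
    rw [coadAct, hall]; simp
  have hYmem : ∀ Y ∈ gr (-1), Y ∈ (⨆ i < (0 : ℤ), gr i) := by
    intro Y hY
    exact (le_iSup₂ (f := fun (i : ℤ) (_ : i < 0) => gr i) (-1) (by norm_num)) hY
  -- main step: coadjoint action of A on ♯C vanishes for any C ∈ gr 0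
  have key2 : ∀ C ∈ gr 0, coadAct ad' A (sharpG C) = 0 := by
    intro C hC
    set v : G := flatG (coadAct ad' A (sharpG C)) with hv
    -- v ∈ gr 0
    have hv0 : v ∈ gr 0 := by
      refine mem_gr_zero gr hint horth v ?_
      intro j hj w hw
      rw [hv, inner_flatG, coadAct, LinearMap.neg_apply, LinearMap.comp_apply,
        sharpG_apply, had']
      have hmem : ⁅A, w⁆ ∈ gr (0 + j) := hbkt 0 j A hA w hw
      rw [horth 0 (0 + j) (by omega) C hC _ hmem, neg_zero]
    -- from admissibility, ⁅Y, v⁆ = 0 for all Y ∈ gr (-1)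
    have hzero : ∀ Y ∈ gr (-1), ⁅Y, v⁆ = 0 := by
      intro Y hY
      have heq := hadm 0 (zero_mem _) (sharpG C) Y (hYmem Y hY) (0, sharpG A)
      simp only [ctBkt, thetaG, ← had', coad_zl, coad_zr, key1 Y hY A hA, flatG_zero,
        sharpG_zero, flatG_sharpG, ad'_zero, LinearMap.zero_apply, map_zero, map_neg,
        sub_zero, zero_sub, sub_self, flatG_neg, neg_zero, Prod.mk_add_mk, add_zero,
        zero_add, Prod.mk.injEq] at heq
      have h1 := heq.1
      rw [had'] at h1
      rw [← hv] at h1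
      rw [← neg_eq_zero]
      exact h1.symm
    have hv_eq : v = 0 := by
      refine hfaith v hv0 ?_
      intro w hw
      exact skew0 w v (hzero w hw)
    rw [hv] at hv_eq
    exact flatG_eq_zero hv_eq
  -- conclude
  have hABmem : ⁅A, B⁆ ∈ gr 0 := by
    have := hbkt 0 0 A hA B hB
    simpa using this
  have hk := key2 ⁅A, B⁆ hABmem
  have h3 : (coadAct ad' A (sharpG ⁅A, B⁆)) B = 0 := by rw [hk]; rfl
  rw [coadAct, LinearMap.neg_apply, LinearMap.comp_apply, sharpG_apply, had',
    neg_eq_zero] at h3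
  exact inner_self_eq_zero.mp h3
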